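/- For the minority rule, if location i is final at time t (neighborhood not 101 or 010), then its value flips every step: E_{t+s}(i) = E_t(i) XOR (s mod 2) for all s ≥ 0. -/
import Mathlib


/-- The minority rule on bits. -/
def mino (a b c : Fin 2) : Fin 2 := if a.val + b.val + c.val ≤ 1 then 1 else 0

/-- A location `i` is final at configuration `σ` if its neighborhood pattern
is not 101 nor 010. -/
def MinFinal {n : ℕ} (σ : ZMod n → Fin 2) (i : ZMod n) : Prop :=
  ¬((σ (i - 1), σ i, σ (i + 1)) = ((1 : Fin 2), (0 : Fin 2), (1 : Fin 2)) ∨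
    (σ (i - 1), σ i, σ (i + 1)) = ((0 : Fin 2), (1 : Fin 2), (0 : Fin 2)))

lemma mino_key (x a b c y : Fin 2)
    (h : ¬((a, b, c) = ((1 : Fin 2), (0 : Fin 2), (1 : Fin 2)) ∨
      (a, b, c) = ((0 : Fin 2), (1 : Fin 2), (0 : Fin 2)))) :
    mino a b c = b + 1 ∧
    ¬((mino x a b, mino a b c, mino b c y) = ((1 : Fin 2), (0 : Fin 2), (1 : Fin 2)) ∨
      (mino x a b, mino a b c, mino b c y) = ((0 : Fin 2), (1 : Fin 2), (0 : Fin 2))) := by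
  revert h; revert x a b c y; decide

theorem mino_final_flips_every_step (n : ℕ) (hn : 5 ≤ n)
    (E : ℕ → ZMod n → Fin 2)
    (hE : ∀ t (i : ZMod n),
      E (t + 1) i = mino (E t (i - 1)) (E t i) (E t (i + 1)))
    (t : ℕ) (i : ZMod n) (h : MinFinal (E t) i) :
    ∀ s : ℕ, E (t + s) i = E t i + (if s % 2 = 1 then 1 else 0) := by
  have main : ∀ s : ℕ, MinFinal (E (t + s)) i ∧
      E (t + s) i = E t i + (if s % 2 = 1 then 1 else 0) := by
    intro s
    induction s with
    | zero => exact ⟨h, by simp⟩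
    | succ s ih =>
      obtain ⟨hf, hv⟩ := ih
      have e1 : i - 1 + 1 = i := sub_add_cancel i 1
      have e2 : i + 1 - 1 = i := add_sub_cancel_right i 1
      have key := mino_key (E (t + s) (i - 1 - 1)) (E (t + s) (i - 1)) (E (t + s) i)
        (E (t + s) (i + 1)) (E (t + s) (i + 1 + 1)) hf
      have h1 : E (t + (s + 1)) (i - 1)
          = mino (E (t + s) (i - 1 - 1)) (E (t + s) (i - 1)) (E (t + s) i) := by
        have := hE (t + s) (i - 1); rwa [e1] at this
      have h2 : E (t + (s + 1)) i
          = mino (E (t + s) (i - 1)) (E (t + s) i) (E (t + s) (i + 1)) :=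
        hE (t + s) i
      have h3 : E (t + (s + 1)) (i + 1)
          = mino (E (t + s) i) (E (t + s) (i + 1)) (E (t + s) (i + 1 + 1)) := by
        have := hE (t + s) (i + 1); rwa [e2] at this
      constructor
      · unfold MinFinal
        rw [h1, h2, h3]
        exact key.2
      · rw [h2, key.1, hv]
        rcases Nat.even_or_odd s with he | ho
        · have hs : s % 2 = 0 := Nat.even_iff.mp he
          have hs1 : (s + 1) % 2 = 1 := by omega
          simp [hs, hs1]
        · have hs : s % 2 = 1 := Nat.odd_iff.mp ho
          have hs1 : (s + 1) % 2 = 0 := by omega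
          have : (1 : Fin 2) + 1 = 0 := rfl
          simp [hs, hs1, add_assoc, this]
  exact fun s => (main s).2
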